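/- arXiv:1608.04047 — 2 statements merged into one kernel-verified Lean document; each statement's English description precedes it below -/
import Mathlib

section
/- Suppose q > 4 and [F : 𝔽_p] = 2^s for some s ≥ 1, and let K be the unique subfield of F of order √q. Then there exists a positive integer d with gcd(d, q−1) = 1 such that d is nondegenerate over F but degenerate over K. Explicitly: d = q − √q + 1 has these properties when √q mod 3 ∈ {0, 1}; d = (q+2)/3 has these properties when √q mod 9 ∈ {2, 8}; and d = (2q+1)/3 has these properties when √q mod 9 ∈ {5, 8}. -/
noncomputable section

/-- `d` is degenerate over a finite field `K` of characteristic `p` with `m = |K| - 1`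
if `d ≡ p^j (mod m)` for some integer `j ≥ 0`. -/
def IsDegenerate (p d m : ℕ) : Prop :=
  ∃ j : ℕ, (d : ZMod m) = (p : ZMod m) ^ j

/-- `d` is a positive exponent, coprime to `q - 1`, nondegenerate over the field of
order `q` but degenerate over its subfield of order `r = √q`. -/
def IsGoodExponent (p q r d : ℕ) : Prop :=
  0 < d ∧ Nat.gcd d (q - 1) = 1 ∧ ¬ IsDegenerate p d (q - 1) ∧ IsDegenerate p d (r - 1)

lemma degOne (p m k : ℕ) : IsDegenerate p (1 + m * k) m := by
  refine ⟨0, ?_⟩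
  push_cast
  simp [ZMod.natCast_self]

lemma nondeg_aux (p N d : ℕ) (hp : 2 ≤ p) (hN : 0 < N) (hq4 : 4 < p ^ N)
    (hd : d < p ^ N - 1) (hne : ∀ i, i < N → d ≠ p ^ i) :
    ¬ IsDegenerate p d (p ^ N - 1) := by
  rintro ⟨j, hj⟩
  have hm : p ^ N - 1 = p ^ N - 1 := rfl
  set m := p ^ N - 1 with hmdef
  have hmod : (p ^ N) % m = 1 % m := by
    have h1 : p ^ N = m + 1 := by omega
    rw [h1, Nat.add_mod_left]
  -- p ^ j ≡ p ^ (j % N) [MOD m]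
  have key : p ^ j ≡ p ^ (j % N) [MOD m] := by
    conv_lhs => rw [← Nat.div_add_mod j N]
    rw [pow_add, pow_mul]
    calc ((p ^ N) ^ (j / N)) * p ^ (j % N)
        ≡ 1 ^ (j / N) * p ^ (j % N) [MOD m] :=
          Nat.ModEq.mul_right _ (Nat.ModEq.pow _ hmod)
      _ = p ^ (j % N) := by rw [one_pow, one_mul]
  have hcast : ((d : ℕ) : ZMod m) = ((p ^ (j % N) : ℕ) : ZMod m) := by
    rw [hj]
    have h2 : ((p ^ j : ℕ) : ZMod m) = ((p ^ (j % N) : ℕ) : ZMod m) :=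
      (ZMod.natCast_eq_natCast_iff _ _ _).mpr key
    push_cast at h2 ⊢
    exact h2
  have heq : d ≡ p ^ (j % N) [MOD m] := (ZMod.natCast_eq_natCast_iff _ _ _).mp hcast
  have hjN : j % N < N := Nat.mod_lt _ hN
  have hlt : p ^ (j % N) < m := by
    have h1 : p ^ (j % N) ≤ p ^ (N - 1) := Nat.pow_le_pow_right (by omega) (by omega)
    have h2 : p ^ (N - 1) * 2 ≤ p ^ (N - 1) * p := Nat.mul_le_mul_left _ hp
    have h3 : p ^ (N - 1) * p = p ^ N := by
      rw [← pow_succ]; congr 1; omega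
    omega
  have : d = p ^ (j % N) := by
    unfold Nat.ModEq at heq
    rw [Nat.mod_eq_of_lt hd, Nat.mod_eq_of_lt hlt] at heq
    exact heq
  exact hne _ hjN this

lemma aux (p q r N : ℕ) (hp : p.Prime) (hNpos : 0 < N) (hq : q = p ^ N)
    (hqr : q = r * r) (hpr : p ∣ r) (hq4 : 4 < q) :
    (∃ d, IsGoodExponent p q r d) ∧
    (r % 3 = 0 ∨ r % 3 = 1 → IsGoodExponent p q r (q - r + 1)) ∧
    (r % 9 = 2 ∨ r % 9 = 8 → IsGoodExponent p q r ((q + 2) / 3)) ∧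
    (r % 9 = 5 ∨ r % 9 = 8 → IsGoodExponent p q r ((2 * q + 1) / 3)) := by
  have hp2 : 2 ≤ p := hp.two_le
  have hr3 : 3 ≤ r := by
    by_contra h
    push_neg at h
    have h2 : r ≤ 2 := by omega
    have := Nat.mul_le_mul h2 h2
    omega
  have hrr : 3 * r ≤ r * r := Nat.mul_le_mul_right r hr3
  have hP1 : (r - 1) * (r + 1) + 1 = r * r := by
    obtain ⟨u, rfl⟩ : ∃ u, r = u + 1 := ⟨r - 1, by omega⟩
    simp
    ring
  have hq1 : q - 1 = (r - 1) * (r + 1) := by omega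
  -- Case A
  have goodA : r % 3 = 0 ∨ r % 3 = 1 → IsGoodExponent p q r (q - r + 1) := by
    intro h3
    have hd1 : q - r + 1 = 1 + (r - 1) * r := by
      have : (r - 1) * r + r = r * r := by
        obtain ⟨u, rfl⟩ : ∃ u, r = u + 1 := ⟨r - 1, by omega⟩
        simp
        ring
      omega
    have hd2 : q - r + 1 = 3 + (r + 1) * (r - 2) := by
      have : (r + 1) * (r - 2) + (r + 2) = r * r := by
        obtain ⟨u, rfl⟩ : ∃ u, r = u + 2 := ⟨r - 2, by omega⟩
        simp
        ring
      omega
    refine ⟨by omega, ?_, ?_, ?_⟩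
    · rw [hq1]
      refine Nat.Coprime.mul_right ?_ ?_
      · rw [hd1]
        exact (Nat.coprime_add_mul_left_left 1 (r - 1) r).mpr (Nat.coprime_one_left _)
      · rw [hd2]
        refine (Nat.coprime_add_mul_left_left 3 (r + 1) (r - 2)).mpr ?_
        exact (Nat.prime_three.coprime_iff_not_dvd).mpr (by omega)
    · rw [hq]
      refine nondeg_aux p N _ hp2 hNpos (by omega) (by omega) ?_
      intro i hi hdi
      rcases Nat.eq_zero_or_pos i with hi0 | hi1
      · rw [hi0, pow_zero] at hdi
        omega
      · have h2 : p ∣ p ^ i := dvd_pow_self p (by omega)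
        have hmul : p ∣ (r - 1) * r := Dvd.dvd.mul_left hpr (r - 1)
        have h5 : p ∣ (r - 1) * r + 1 := by
          rw [show (r - 1) * r + 1 = p ^ N - r + 1 by omega, hdi]
          exact h2
        have h6 : p ∣ 1 := (Nat.dvd_add_right hmul).mp h5
        have := Nat.le_of_dvd one_pos h6
        omega
    · rw [hd1]
      exact degOne p (r - 1) r
  -- Case B
  have goodB : r % 9 = 2 ∨ r % 9 = 8 → IsGoodExponent p q r ((q + 2) / 3) := by
    intro h9
    have hr32 : r % 3 = 2 := by omega
    have hq3 : q % 3 = 1 := by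
      rw [hqr, Nat.mul_mod, hr32]
    have hq9 : q % 9 = 4 ∨ q % 9 = 1 := by
      rw [hqr, Nat.mul_mod]
      rcases h9 with h | h <;> rw [h] <;> simp
    set d := (q + 2) / 3 with hddef
    have hd3 : 3 * d = q + 2 := by omega
    set t := (r + 1) / 3 with htdef
    have ht : r + 1 = 3 * t := by omega
    have hd1 : d = 1 + (r - 1) * t := by
      have h1 : 3 * (1 + (r - 1) * t) = 3 + (r - 1) * (3 * t) := by ring
      have h2 : (r - 1) * (3 * t) = (r - 1) * (r + 1) := by rw [← ht]
      omega
    refine ⟨by omega, ?_, ?_, ?_⟩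
    · rw [hq1]
      refine Nat.Coprime.mul_right ?_ ?_
      · rw [hd1]
        exact (Nat.coprime_add_mul_left_left 1 (r - 1) t).mpr (Nat.coprime_one_left _)
      · rw [ht]
        refine Nat.Coprime.mul_right ?_ ?_
        · refine ((Nat.prime_three.coprime_iff_not_dvd).mpr ?_).symm
          intro hdvd
          obtain ⟨c, hc⟩ := hdvd
          omega
        · have hd1' : d = 1 + t * (r - 1) := by rw [hd1]; ring
          rw [hd1']
          exact (Nat.coprime_add_mul_left_left 1 t (r - 1)).mpr (Nat.coprime_one_left _)
    · rw [hq]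
      refine nondeg_aux p N _ hp2 hNpos (by omega) (by omega) ?_
      intro i hi hdi
      rcases Nat.eq_zero_or_pos i with hi0 | hi1
      · rw [hi0, pow_zero] at hdi
        omega
      · -- 3 * p^i = p^N + 2, so p ∣ 2, p = 2
        have heq : 3 * p ^ i = p ^ N + 2 := by rw [← hdi]; omega
        have h2 : p ∣ 3 * p ^ i := Dvd.dvd.mul_left (dvd_pow_self p (by omega)) 3
        have h3 : p ∣ p ^ N := dvd_pow_self p (by omega)
        have h4 : p ∣ 2 := by
          have := Nat.dvd_sub h2 h3
          have he : 3 * p ^ i - p ^ N = 2 := by omega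
          rwa [he] at this
        have hpeq : p = 2 := by
          have := Nat.le_of_dvd (by norm_num) h4
          omega
        subst hpeq
        -- 3 * 2^i = 2^N + 2, with 2^N > 4 so N ≥ 3
        have hN3 : 3 ≤ N := by
          by_contra h
          push_neg at h
          have : 2 ^ N ≤ 2 ^ 2 := Nat.pow_le_pow_right (by norm_num) (by omega)
          omega
        rcases Nat.lt_or_ge i 2 with hilt | hige
        · have hieq : i = 1 := by omega
          rw [hieq, pow_one] at heq
          have : 2 ^ 3 ≤ 2 ^ N := Nat.pow_le_pow_right (by norm_num) hN3
          omega
        · have hd4i : 4 ∣ 2 ^ i := by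
            calc (4 : ℕ) = 2 ^ 2 := by norm_num
            _ ∣ 2 ^ i := pow_dvd_pow 2 hige
          have hd4N : 4 ∣ 2 ^ N := by
            calc (4 : ℕ) = 2 ^ 2 := by norm_num
            _ ∣ 2 ^ N := pow_dvd_pow 2 (by omega)
          omega
    · rw [hd1]
      exact degOne p (r - 1) t
  -- Case C
  have goodC : r % 9 = 5 ∨ r % 9 = 8 → IsGoodExponent p q r ((2 * q + 1) / 3) := by
    intro h9
    have hr32 : r % 3 = 2 := by omega
    have hq3 : q % 3 = 1 := by
      rw [hqr, Nat.mul_mod, hr32]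
    have hq9 : q % 9 = 7 ∨ q % 9 = 1 := by
      rw [hqr, Nat.mul_mod]
      rcases h9 with h | h <;> rw [h] <;> simp
    set d := (2 * q + 1) / 3 with hddef
    have hd3 : 3 * d = 2 * q + 1 := by omega
    set t := (r + 1) / 3 with htdef
    have ht : r + 1 = 3 * t := by omega
    have hd1 : d = 1 + (r - 1) * (2 * t) := by
      have h1 : 3 * (1 + (r - 1) * (2 * t)) = 3 + 2 * ((r - 1) * (3 * t)) := by ring
      have h2 : (r - 1) * (3 * t) = (r - 1) * (r + 1) := by rw [← ht]
      omega
    refine ⟨by omega, ?_, ?_, ?_⟩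
    · rw [hq1]
      refine Nat.Coprime.mul_right ?_ ?_
      · rw [hd1]
        exact (Nat.coprime_add_mul_left_left 1 (r - 1) (2 * t)).mpr (Nat.coprime_one_left _)
      · rw [ht]
        refine Nat.Coprime.mul_right ?_ ?_
        · refine ((Nat.prime_three.coprime_iff_not_dvd).mpr ?_).symm
          intro hdvd
          obtain ⟨c, hc⟩ := hdvd
          omega
        · have hd1' : d = 1 + t * (2 * (r - 1)) := by rw [hd1]; ring
          rw [hd1']
          exact (Nat.coprime_add_mul_left_left 1 t (2 * (r - 1))).mpr (Nat.coprime_one_left _)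
    · rw [hq]
      refine nondeg_aux p N _ hp2 hNpos (by omega) (by omega) ?_
      intro i hi hdi
      rcases Nat.eq_zero_or_pos i with hi0 | hi1
      · rw [hi0, pow_zero] at hdi
        omega
      · have heq : 3 * p ^ i = 2 * p ^ N + 1 := by rw [← hdi]; omega
        have h2 : p ∣ 3 * p ^ i := Dvd.dvd.mul_left (dvd_pow_self p (by omega)) 3
        have h3 : p ∣ 2 * p ^ N := Dvd.dvd.mul_left (dvd_pow_self p (by omega)) 2
        have h4 : p ∣ 1 := by
          have := Nat.dvd_sub h2 h3
          have he : 3 * p ^ i - 2 * p ^ N = 1 := by omega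
          rwa [he] at this
        have := Nat.le_of_dvd one_pos h4
        omega
    · rw [hd1]
      exact degOne p (r - 1) (2 * t)
  refine ⟨?_, goodA, goodB, goodC⟩
  have hcases : r % 3 = 0 ∨ r % 3 = 1 ∨ r % 9 = 2 ∨ r % 9 = 5 ∨ r % 9 = 8 := by omega
  rcases hcases with h | h | h | h | h
  · exact ⟨_, goodA (Or.inl h)⟩
  · exact ⟨_, goodA (Or.inr h)⟩
  · exact ⟨_, goodB (Or.inl h)⟩
  · exact ⟨_, goodC (Or.inl h)⟩
  · exact ⟨_, goodB (Or.inr h)⟩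

/-- **Lemma.**  Suppose `q > 4` and `[F : 𝔽_p] = 2^s` with `s ≥ 1`, and let `K` be the
subfield of `F` of order `√q = p^(2^(s-1))`.  Then there is a positive integer `d` with
`gcd(d, q-1) = 1` that is nondegenerate over `F` but degenerate over `K`; explicitly,
`d = q - √q + 1` works when `√q mod 3 ∈ {0, 1}`, `d = (q+2)/3` works when
`√q mod 9 ∈ {2, 8}`, and `d = (2q+1)/3` works when `√q mod 9 ∈ {5, 8}`. -/
theorem exists_exponent_nondegenerate_degenerate_sqrt_subfield
    (p : ℕ) (hp : p.Prime) (F : Type) [Field F] [Fintype F] [CharP F p]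
    (s : ℕ) (hs : 1 ≤ s) (hcard : Fintype.card F = p ^ 2 ^ s)
    (hq : 4 < Fintype.card F) :
    (∃ d : ℕ, IsGoodExponent p (Fintype.card F) (p ^ 2 ^ (s - 1)) d) ∧
    (p ^ 2 ^ (s - 1) % 3 = 0 ∨ p ^ 2 ^ (s - 1) % 3 = 1 →
      IsGoodExponent p (Fintype.card F) (p ^ 2 ^ (s - 1))
        (Fintype.card F - p ^ 2 ^ (s - 1) + 1)) ∧
    (p ^ 2 ^ (s - 1) % 9 = 2 ∨ p ^ 2 ^ (s - 1) % 9 = 8 →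
      IsGoodExponent p (Fintype.card F) (p ^ 2 ^ (s - 1)) ((Fintype.card F + 2) / 3)) ∧
    (p ^ 2 ^ (s - 1) % 9 = 5 ∨ p ^ 2 ^ (s - 1) % 9 = 8 →
      IsGoodExponent p (Fintype.card F) (p ^ 2 ^ (s - 1)) ((2 * Fintype.card F + 1) / 3)) := by
  have hs2 : 2 ^ s = 2 ^ (s - 1) + 2 ^ (s - 1) := by
    have h : 2 ^ (s - 1) * 2 = 2 ^ s := by
      rw [← pow_succ]
      congr 1
      omega
    omega
  have hqr : Fintype.card F = p ^ 2 ^ (s - 1) * p ^ 2 ^ (s - 1) := by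
    rw [hcard, hs2, pow_add]
  exact aux p (Fintype.card F) (p ^ 2 ^ (s - 1)) (2 ^ s) hp
    (Nat.pow_pos (by norm_num : 0 < 2)) hcard hqr
    (dvd_pow_self p (by positivity)) hq
end
end

section
/- Let t, n, and d be positive integers with t ≥ 2, d ≢ 0 (mod t^n−1), and d ≢ 1 (mod t−1). Then there exist nonzero a, b ∈ ℤ/(t^n−1)ℤ such that a ≺ b and d·b ≺ d·a. -/
noncomputable section

/-- The `i`-th digit of the standard `t`-ary expansion of the canonical representative
of `a ∈ ℤ/Mℤ` (for `M = t^n - 1`, the representative is `< t^n`, so these are exactly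
the digits `a_0, …, a_{n-1}` of the standard expansion, and `0` for `i ≥ n`). -/
def zmodDigit (t : ℕ) {M : ℕ} (a : ZMod M) (i : ℕ) : ℕ :=
  a.val / t ^ i % t

/-- `b` covers `a` (written `a ⪯ b`): every `t`-ary digit of `a` is at most the
corresponding digit of `b`. -/
def Covers (t : ℕ) {M : ℕ} (a b : ZMod M) : Prop :=
  ∀ i : ℕ, zmodDigit t a i ≤ zmodDigit t b i

/-- `b` strictly covers `a` (written `a ≺ b`): `a ⪯ b` and `a ≠ b`. -/
def StrictlyCovers (t : ℕ) {M : ℕ} (a b : ZMod M) : Prop :=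
  Covers t a b ∧ a ≠ b

namespace CoverAux

def rep (t n : ℕ) : ℕ := ∑ i ∈ Finset.range n, t ^ i

lemma rep_succ (t n : ℕ) : rep t (n+1) = 1 + t * rep t n := by
  unfold rep
  rw [Finset.sum_range_succ']
  simp only [pow_zero, pow_succ']
  rw [← Finset.mul_sum]
  ring

lemma rep_mul (s n : ℕ) : s * rep (s+1) n + 1 = (s+1) ^ n := by
  induction n with
  | zero => simp [rep]
  | succ n ih =>
    rw [rep_succ]
    calc s * (1 + (s+1) * rep (s+1) n) + 1
        = (s + 1) * (s * rep (s+1) n + 1) := by ring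
      _ = (s+1) * (s+1)^n := by rw [ih]
      _ = (s+1)^(n+1) := by rw [pow_succ]; ring

lemma rep_pos (t n : ℕ) (hn : 0 < n) : 0 < rep t n := by
  obtain ⟨m, rfl⟩ : ∃ m, n = m + 1 := ⟨n - 1, by omega⟩
  rw [rep_succ]; omega

lemma digit_mul_rep (t : ℕ) (k : ℕ) (hk : k < t) :
    ∀ i n, i < n → (k * rep t n) / t ^ i % t = k := by
  have ht : 0 < t := by omega
  intro i
  induction i with
  | zero =>
    intro n hn
    obtain ⟨m, rfl⟩ : ∃ m, n = m + 1 := ⟨n - 1, by omega⟩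
    rw [rep_succ]
    have h1 : k * (1 + t * rep t m) = k + t * (k * rep t m) := by ring
    rw [pow_zero, Nat.div_one, h1, Nat.add_mul_mod_self_left, Nat.mod_eq_of_lt hk]
  | succ i ih =>
    intro n hn
    obtain ⟨m, rfl⟩ : ∃ m, n = m + 1 := ⟨n - 1, by omega⟩
    rw [rep_succ]
    have h1 : k * (1 + t * rep t m) = k + t * (k * rep t m) := by ring
    rw [h1, pow_succ', ← Nat.div_div_eq_div_mul,
      Nat.add_mul_div_left _ _ ht, Nat.div_eq_of_lt hk, Nat.zero_add]
    exact ih m (by omega)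

lemma digit_pow (t : ℕ) (ht : 2 ≤ t) (i j : ℕ) :
    t ^ i / t ^ j % t = if j = i then 1 else 0 := by
  rcases lt_trichotomy j i with h | h | h
  · rw [if_neg (by omega), Nat.pow_div (by omega) (by omega)]
    obtain ⟨m, hm⟩ : ∃ m, i - j = m + 1 := ⟨i - j - 1, by omega⟩
    rw [hm, pow_succ']
    exact Nat.mul_mod_right t _
  · subst h
    rw [if_pos rfl, Nat.div_self (pow_pos (show 0 < t by omega) j), Nat.mod_eq_of_lt (by omega)]
  · rw [if_neg (by omega), Nat.div_eq_of_lt (Nat.pow_lt_pow_right (by omega) h), Nat.zero_mod]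

end CoverAux

open CoverAux

/-- **Lemma.**  Let `t ≥ 2` and let `n`, `d` be positive integers with
`d ≢ 0 (mod t^n - 1)` and `d ≢ 1 (mod t - 1)`.  Then there exist nonzero
`a, b ∈ ℤ/(t^n-1)ℤ` with `a ≺ b` and `d·b ≺ d·a`. -/
theorem exists_strict_cover_of_not_one_mod
    (t n d : ℕ) (ht : 2 ≤ t) (hn : 0 < n) (hd : 0 < d)
    (hd0 : (d : ZMod (t ^ n - 1)) ≠ 0)
    (hd1 : (d : ZMod (t - 1)) ≠ 1) :
    ∃ a b : ZMod (t ^ n - 1), a ≠ 0 ∧ b ≠ 0 ∧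
      StrictlyCovers t a b ∧
      StrictlyCovers t ((d : ZMod (t ^ n - 1)) * b) ((d : ZMod (t ^ n - 1)) * a) := by
  -- t ≥ 3
  have ht3 : 3 ≤ t := by
    by_contra h
    have ht2 : t = 2 := by omega
    subst ht2
    exact hd1 (Subsingleton.elim (α := ZMod 1) _ _)
  have htpos : 0 < t := by omega
  have htnself : t ≤ t ^ n := Nat.le_self_pow (by omega) t
  have hM2 : 2 ≤ t ^ n - 1 := by omega
  haveI : NeZero (t ^ n - 1) := ⟨by omega⟩
  -- t is a unit mod t^n - 1
  have htunit : ((t : ZMod (t ^ n - 1)))^n = 1 := by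
    have h1 : ((t ^ n : ℕ) : ZMod (t ^ n - 1)) = 1 := by
      rw [show t ^ n = (t ^ n - 1) + 1 by omega]
      push_cast
      rw [ZMod.natCast_self, zero_add]
    rw [← h1]; push_cast; ring
  have hdpow_ne : ∀ i : ℕ, (d : ZMod (t^n-1)) * ((t : ZMod (t^n-1)))^i ≠ 0 := by
    intro i h
    apply hd0
    have hni : n * i = i + i * (n - 1) := by
      obtain ⟨m, rfl⟩ : ∃ m, n = m + 1 := ⟨n - 1, by omega⟩
      simp only [Nat.add_sub_cancel]
      ring
    have h2 : (d : ZMod (t^n-1)) * ((t:ZMod (t^n-1))^n)^i = 0 := by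
      rw [← pow_mul, hni, pow_add, ← mul_assoc, h, zero_mul]
    simpa [htunit] using h2
  by_cases hcop : Nat.Coprime d (t ^ n - 1)
  · -- Case 2: d coprime to M, use repunits
    have hs2 : 2 ≤ t - 1 := by omega
    have hMrep : (t - 1) * rep t n + 1 = t ^ n := by
      have h := rep_mul (t - 1) n
      rw [show t - 1 + 1 = t by omega] at h
      exact h
    have hR1 : 1 ≤ rep t n := rep_pos t n hn
    set s := t - 1 with hsdef
    set R := rep t n with hRdef
    have hMeq : t ^ n - 1 = s * R := by omega
    have he_lt : d % s < s := Nat.mod_lt _ (by omega)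
    set e := d % s with hedef
    have hcop_s : Nat.Coprime d s := Nat.Coprime.coprime_dvd_right ⟨R, hMeq⟩ hcop
    have he0 : e ≠ 0 := by
      intro h
      have hsd : s ∣ d := Nat.dvd_of_mod_eq_zero h
      have hg1 : Nat.gcd d s = 1 := hcop_s
      have h1 : s ∣ Nat.gcd d s := Nat.dvd_gcd hsd dvd_rfl
      rw [hg1] at h1
      have := Nat.le_of_dvd one_pos h1
      omega
    have he1 : e ≠ 1 := by
      intro h
      apply hd1
      have h2 : ((d % s : ℕ) : ZMod s) = (d : ZMod s) := ZMod.natCast_mod d s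
      rw [← hedef, h] at h2
      rw [hsdef] at h2
      rw [← h2]
      norm_num
    have he2 : 2 ≤ e := by omega
    set k := (s - 1) / e with hkdef
    have hk1 : 1 ≤ k := (Nat.one_le_div_iff (by omega)).mpr (by omega)
    have hke : k * e ≤ s - 1 := Nat.div_mul_le_self (s-1) e
    have hmodlt : (s-1) % e < e := Nat.mod_lt _ (by omega)
    have hdm := Nat.div_add_mod (s-1) e
    have hk1e : s ≤ (k+1) * e := by
      have h1 : (k+1)*e = k*e + e := by ring
      have h2 : e * ((s-1)/e) = k * e := by rw [← hkdef]; ring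
      omega
    have hk2 : k + 1 ≤ s - 1 := by
      have h1 : k ≤ (s-1)/2 := Nat.div_le_div_left he2 (by omega)
      omega
    have hf2f1 : (k+1)*e - s < k*e := by
      have h1 : (k+1)*e = k*e + e := by ring
      omega
    have hbound : ∀ m : ℕ, m ≤ s - 1 → m * R < t ^ n - 1 := by
      intro m hm
      have h1 : m * R ≤ (s-1) * R := Nat.mul_le_mul_right R hm
      have h2 : (s-1) * R + R = s * R := by
        have h3 : (s-1) + 1 = s := by omega
        calc (s-1)*R + R = ((s-1)+1)*R := by ring
          _ = s*R := by rw [h3]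
      omega
    have hval : ∀ m : ℕ, m ≤ s - 1 → ((m * R : ℕ) : ZMod (t^n-1)).val = m * R :=
      fun m hm => ZMod.val_cast_of_lt (hbound m hm)
    have hdig : ∀ m j : ℕ, m ≤ s - 1 → (m * R) / t ^ j % t = if j < n then m else 0 := by
      intro m j hm
      split
      · next h => exact digit_mul_rep t m (by omega) j n h
      · next h =>
        have h2 : m * R < t ^ j := by
          have h3 := hbound m hm
          have h4 : t ^ n ≤ t ^ j := Nat.pow_le_pow_right (by omega) (by omega)
          omega
        rw [Nat.div_eq_of_lt h2, Nat.zero_mod]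
    have hred : ∀ m : ℕ, (d : ZMod (t^n-1)) * ((m * R : ℕ) : ZMod (t^n-1))
        = (((d * m % s) * R : ℕ) : ZMod (t^n-1)) := by
      intro m
      have key : d * (m * R) = (d * m % s) * R + (d * m / s) * (t^n - 1) := by
        rw [hMeq]
        have h := Nat.mod_add_div (d*m) s
        calc d * (m*R) = (d*m % s + s * (d*m/s)) * R := by rw [h]; ring
          _ = (d*m%s)*R + (d*m/s)*(s*R) := by ring
      have h5 : ((d * (m*R) : ℕ) : ZMod (t^n-1)) = (((d*m%s)*R : ℕ) : ZMod (t^n-1)) := by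
        rw [key]
        push_cast [ZMod.natCast_self]
        ring
      rw [← h5]
      push_cast
      ring
    have hkls : k + 1 < s := by omega
    have hmodk : d * k % s = k * e := by
      rw [Nat.mul_mod, ← hedef, Nat.mod_eq_of_lt (show k < s by omega),
        Nat.mod_eq_of_lt (show e * k < s by rw [mul_comm]; omega), mul_comm]
    have hmodk1 : d * (k+1) % s = (k+1)*e - s := by
      have hcomm : e * (k+1) = (k+1) * e := by ring
      rw [Nat.mul_mod, ← hedef, Nat.mod_eq_of_lt hkls, hcomm,
        Nat.mod_eq_sub_mod hk1e]
      have h1 : (k+1)*e = k*e + e := by ring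
      rw [Nat.mod_eq_of_lt (by omega)]
    have hda : (d : ZMod (t^n-1)) * ((k * R : ℕ) : ZMod (t^n-1))
        = (((k*e) * R : ℕ) : ZMod (t^n-1)) := by rw [hred, hmodk]
    have hdb : (d : ZMod (t^n-1)) * (((k+1) * R : ℕ) : ZMod (t^n-1))
        = ((((k+1)*e - s) * R : ℕ) : ZMod (t^n-1)) := by rw [hred, hmodk1]
    refine ⟨((k * R : ℕ) : ZMod (t^n-1)), (((k+1) * R : ℕ) : ZMod (t^n-1)),
      ?_, ?_, ⟨?_, ?_⟩, ⟨?_, ?_⟩⟩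
    · intro h
      have h1 := (ZMod.val_eq_zero _).mpr h
      rw [hval k (by omega)] at h1
      have : 0 < k * R := Nat.mul_pos (by omega) (by omega)
      omega
    · intro h
      have h1 := (ZMod.val_eq_zero _).mpr h
      rw [hval (k+1) (by omega)] at h1
      have : 0 < (k+1) * R := Nat.mul_pos (by omega) (by omega)
      omega
    · intro j
      unfold zmodDigit
      rw [hval k (by omega), hval (k+1) (by omega), hdig k j (by omega),
        hdig (k+1) j (by omega)]
      split <;> omega
    · intro h
      have h1 := congrArg ZMod.val h
      rw [hval k (by omega), hval (k+1) (by omega)] at h1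
      have h2 : (k+1) * R = k * R + R := by ring
      omega
    · intro j
      unfold zmodDigit
      rw [hda, hdb, hval ((k+1)*e - s) (by omega), hval (k*e) (by omega),
        hdig ((k+1)*e - s) j (by omega), hdig (k*e) j (by omega)]
      split <;> omega
    · rw [hda, hdb]
      intro h
      have h1 := congrArg ZMod.val h
      rw [hval ((k+1)*e - s) (by omega), hval (k*e) (by omega)] at h1
      have h2 : ((k+1)*e - s) * R < (k*e) * R :=
        (Nat.mul_lt_mul_right (show 0 < R by omega)).mpr hf2f1
      omega
  · -- Case 1: gcd(d, M) > 1
    have hgd : Nat.gcd d (t^n-1) ∣ d := Nat.gcd_dvd_left _ _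
    have hgM : Nat.gcd d (t^n-1) ∣ t^n - 1 := Nat.gcd_dvd_right _ _
    set g := Nat.gcd d (t^n-1) with hgdef
    have hg0 : g ≠ 0 := by
      intro h
      rw [Nat.gcd_eq_zero_iff] at h
      omega
    have hg2 : 2 ≤ g := by
      rw [Nat.Coprime] at hcop
      omega
    set v := (t^n - 1) / g with hvdef
    have hv_pos : 0 < v := Nat.div_pos (Nat.le_of_dvd (by omega) hgM) (by omega)
    have hv_lt : v < t^n - 1 := Nat.div_lt_self (by omega) (by omega)
    have hdv : t^n - 1 ∣ d * v := by
      obtain ⟨d', hd'⟩ := hgd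
      refine ⟨d', ?_⟩
      obtain ⟨M', hM'⟩ := hgM
      have hvM' : v = M' := by rw [hvdef, hM', Nat.mul_div_cancel_left _ (by omega : 0 < g)]
      rw [hd', hvM', hM']; ring
    -- b := v
    have hb_val : ((v : ℕ) : ZMod (t^n-1)).val = v := ZMod.val_cast_of_lt hv_lt
    have hdb : (d : ZMod (t^n-1)) * ((v : ℕ) : ZMod (t^n-1)) = 0 := by
      have : ((d * v : ℕ) : ZMod (t^n-1)) = 0 :=
        (ZMod.natCast_eq_zero_iff _ _).mpr hdv
      rw [← this]; push_cast; ring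
    set i := Nat.log t v with hidef
    have hi_lt : i < n := Nat.log_lt_of_lt_pow (by omega) (by omega)
    have h1 : t ^ i ≤ v := Nat.pow_log_le_self t (by omega)
    have h2 : v < t ^ (i+1) := Nat.lt_pow_succ_log_self (by omega) v
    have hdigb : 1 ≤ v / t^i % t := by
      have h3 : 1 ≤ v / t^i := (Nat.one_le_div_iff (pow_pos htpos i)).mpr h1
      have h4 : v / t^i < t := by
        rw [Nat.div_lt_iff_lt_mul (pow_pos htpos i)]
        calc v < t^(i+1) := h2
          _ = t * t^i := by rw [pow_succ']
      rw [Nat.mod_eq_of_lt h4]; exact h3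
    -- a := t^i
    have hpow_lt : t ^ i < t^n - 1 := by
      have e1 : t ^ i ≤ t ^ (n-1) := Nat.pow_le_pow_right (by omega) (by omega)
      have e2 : t ^ (n-1) * t = t ^ n := by rw [← pow_succ]; congr 1; omega
      have e3 : 1 ≤ t ^ (n-1) := Nat.one_le_pow _ _ (by omega)
      nlinarith
    have ha_val : ((t^i : ℕ) : ZMod (t^n-1)).val = t^i := ZMod.val_cast_of_lt hpow_lt
    have hda_ne : (d : ZMod (t^n-1)) * ((t^i : ℕ) : ZMod (t^n-1)) ≠ 0 := by
      have : ((t^i : ℕ) : ZMod (t^n-1)) = ((t : ZMod (t^n-1)))^i := by push_cast; ring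
      rw [this]; exact hdpow_ne i
    refine ⟨((t^i : ℕ) : ZMod (t^n-1)), ((v : ℕ) : ZMod (t^n-1)), ?_, ?_, ⟨?_, ?_⟩, ⟨?_, ?_⟩⟩
    · intro h
      have := ZMod.val_eq_zero _ |>.mpr h
      rw [ha_val] at this
      exact absurd this (by positivity)
    · intro h
      have := ZMod.val_eq_zero _ |>.mpr h
      omega
    · intro j
      unfold zmodDigit
      rw [ha_val, hb_val, digit_pow t ht i j]
      split
      · next hji => subst hji; exact hdigb
      · exact Nat.zero_le _
    · intro h
      rw [h, hdb] at hda_ne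
      exact hda_ne rfl
    · intro j
      unfold zmodDigit
      rw [hdb, ZMod.val_zero]
      simp
    · rw [hdb]
      exact fun h => hda_ne h.symm
end
end
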